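/- Let n ≥ 6 be an even integer and let i be any index (mod n). If λ, μ ∈ [0,1] satisfy (1−λ) ω_i^n + λ ω_{i+n/2}^n = (1−μ) ω_{i+1}^n + μ ω_{i+n/2+2}^n, then μ = λ / (λ + c²(1−λ)), where c = cos(2π/n)/cos(π/n). -/

import Mathlib

open Real

noncomputable section

/-- The ambient vector space ℝ³. -/
abbrev V3 : Type := Fin 3 → ℝ

/-- The linear functional on ℝ³ given by the Euclidean inner product with `v`. -/
def dotL (v : V3) : V3 →ₗ[ℝ] ℝ :=
  ∑ i, v i • (LinearMap.proj i : V3 →ₗ[ℝ] ℝ)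

/-- The unit effect `u (x, y, z) = z`. -/
def uEff : V3 →ₗ[ℝ] ℝ := LinearMap.proj 2

/-- `e` is an effect on `Ω`: a linear functional with values in `[0,1]` on `Ω`. -/
def IsEffect (Ω : Set V3) (e : V3 →ₗ[ℝ] ℝ) : Prop :=
  ∀ ω ∈ Ω, 0 ≤ e ω ∧ e ω ≤ 1

/-- The states `ω 0, …, ω (l-1)` are perfectly distinguishable in `Ω`:
there are effects summing to the unit effect with `e i (ω j) = δ_{ij}`. -/
def PerfDist (Ω : Set V3) {l : ℕ} (ω : Fin l → V3) : Prop :=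
  ∃ e : Fin l → (V3 →ₗ[ℝ] ℝ),
    (∀ i, IsEffect Ω (e i)) ∧ (∑ i, e i) = uEff ∧
    ∀ i j, e i (ω j) = if i = j then 1 else 0

/-- `S` is an entropy of mixing on `Ω`: it vanishes on extreme points, and for every
finite family of perfectly distinguishable states and every probability weight,
`S (Σ pᵢ ωᵢ) = Σ pᵢ S(ωᵢ) − Σ pᵢ log pᵢ` (note `Real.log 0 = 0`, so `0 log 0 = 0`). -/
def IsEntropyOfMixing (Ω : Set V3) (S : V3 → ℝ) : Prop :=
  (∀ ω ∈ Set.extremePoints ℝ Ω, S ω = 0) ∧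
  ∀ (l : ℕ) (ω : Fin l → V3), (∀ j, ω j ∈ Ω) → PerfDist Ω ω →
    ∀ p : Fin l → ℝ, (∀ i, 0 ≤ p i) → (∑ i, p i) = 1 →
      S (∑ i, p i • ω i) = (∑ i, p i * S (ω i)) - ∑ i, p i * Real.log (p i)

/-- `r_n = √(1 / cos (π/n))`. -/
def rn (n : ℕ) : ℝ := Real.sqrt (1 / Real.cos (π / n))

/-- The pure states `ω_i^n` of the `n`-gon theory (indices mod `n` via periodicity). -/
def pur (n : ℕ) (i : ℤ) : V3 :=
  ![rn n * Real.cos (2 * π * i / n), rn n * Real.sin (2 * π * i / n), 1]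

/-- The `n`-gon state space `Ω_n`: the convex hull of the `n` pure states. -/
def Omega (n : ℕ) : Set V3 :=
  convexHull ℝ {x : V3 | ∃ i : Fin n, x = pur n (i : ℤ)}

/-- The extreme effect `e_i^n` for even `n`. -/
def effE (n : ℕ) (i : ℤ) : V3 →ₗ[ℝ] ℝ :=
  dotL ((1/2 : ℝ) •
    ![rn n * Real.cos ((2*i-1) * π / n), rn n * Real.sin ((2*i-1) * π / n), 1])

/-- The extreme effect `e_i^n` for odd `n`. -/
def effO (n : ℕ) (i : ℤ) : V3 →ₗ[ℝ] ℝ :=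
  dotL ((1/(1 + rn n ^ 2)) •
    ![rn n * Real.cos (2*i*π/n), rn n * Real.sin (2*i*π/n), 1])

/-- The disk state space `Ω_∞ = {(x,y,1) : x² + y² ≤ 1}`. -/
def OmegaInf : Set V3 := {x : V3 | x 2 = 1 ∧ (x 0)^2 + (x 1)^2 ≤ 1}

/-- The pure states `ω_θ^∞` of the disk theory. -/
def purInf (θ : ℝ) : V3 := ![Real.cos θ, Real.sin θ, 1]

/-- The extreme effects `e_θ^∞` of the disk theory. -/
def effInf (θ : ℝ) : V3 →ₗ[ℝ] ℝ :=
  dotL ((1/2 : ℝ) • ![Real.cos θ, Real.sin θ, 1])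

/-- The binary (1-bit Shannon) entropy `H(p) = −p log p − (1−p) log (1−p)`. -/
def H (p : ℝ) : ℝ := -(p * Real.log p) - (1 - p) * Real.log (1 - p)
/-- For even `n ≥ 6`: if `(1−λ) ω_i + λ ω_{i+n/2} = (1−μ) ω_{i+1} + μ ω_{i+n/2+2}`
with `λ, μ ∈ [0,1]`, then `μ = λ / (λ + c² (1−λ))` where `c = cos(2π/n)/cos(π/n)`. -/
theorem stmt10 (n : ℕ) (hn : 6 ≤ n) (m : ℕ) (hm : n = 2 * m) (i : ℤ)
    (lam mu : ℝ) (hlam : lam ∈ Set.Icc (0:ℝ) 1) (hmu : mu ∈ Set.Icc (0:ℝ) 1)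
    (heq : (1 - lam) • pur n i + lam • pur n (i + m)
         = (1 - mu) • pur n (i + 1) + mu • pur n (i + m + 2)) :
    mu = lam / (lam + (Real.cos (2*π/n) / Real.cos (π/n))^2 * (1 - lam)) := by

  have hn0 : (0:ℝ) < (n:ℝ) := by positivity
  have hn6 : (6:ℝ) ≤ (n:ℝ) := by exact_mod_cast hn
  have hnm : (n:ℝ) = 2 * (m:ℝ) := by exact_mod_cast congrArg (Nat.cast : ℕ → ℝ) hm
  set a : ℝ := 2 * π * (i:ℝ) / n with ha
  set t : ℝ := 2 * π / n with ht
  have hA1 : 2 * π * ((i:ℝ) + 1) / n = a + t := by rw [ha, ht]; field_simp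
  have hA2 : 2 * π * ((i:ℝ) + (m:ℝ)) / n = a + π := by
    rw [ha]; field_simp; rw [hnm]; ring
  have hA3 : 2 * π * ((i:ℝ) + (m:ℝ) + 2) / n = a + (t + t) + π := by
    rw [ha, ht]; field_simp; rw [hnm]; ring
  have hπ := Real.pi_pos
  have hcp : 0 < Real.cos (π / n) := by
    apply Real.cos_pos_of_mem_Ioo
    constructor
    · have : 0 < π / n := by positivity
      linarith
    · rw [div_lt_div_iff₀ hn0 (by norm_num : (0:ℝ) < 2)]; nlinarith
  have hct : 0 < Real.cos t := by
    apply Real.cos_pos_of_mem_Ioo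
    constructor
    · have : 0 < t := by rw [ht]; positivity
      linarith
    · rw [ht, div_lt_div_iff₀ hn0 (by norm_num : (0:ℝ) < 2)]; nlinarith
  have hst : 0 < Real.sin t := by
    apply Real.sin_pos_of_pos_of_lt_pi
    · rw [ht]; positivity
    · rw [ht, div_lt_iff₀ hn0]; nlinarith
  have hr : 0 < rn n := Real.sqrt_pos.mpr (by positivity)
  have h0 := congrFun heq 0
  have h1 := congrFun heq 1
  simp only [pur, Pi.add_apply, Pi.smul_apply, smul_eq_mul, Matrix.cons_val_zero,
    Matrix.cons_val_one, Matrix.head_cons] at h0 h1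
  push_cast at h0 h1
  rw [← ha, hA1, hA2, hA3, Real.cos_add_pi, Real.cos_add_pi] at h0
  rw [← ha, hA1, hA2, hA3, Real.sin_add_pi, Real.sin_add_pi] at h1
  have E1 : (1 - 2*lam) * Real.cos a
      = (1-mu) * Real.cos (a+t) - mu * Real.cos (a+(t+t)) := by
    apply mul_left_cancel₀ hr.ne'
    linear_combination h0
  have E2 : (1 - 2*lam) * Real.sin a
      = (1-mu) * Real.sin (a+t) - mu * Real.sin (a+(t+t)) := by
    apply mul_left_cancel₀ hr.ne'
    linear_combination h1
  simp only [Real.cos_add, Real.sin_add] at E1 E2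
  have pytha : Real.sin a ^ 2 + Real.cos a ^ 2 = 1 := Real.sin_sq_add_cos_sq a
  have pytht : Real.sin t ^ 2 + Real.cos t ^ 2 = 1 := Real.sin_sq_add_cos_sq t
  have key1 : 1 - 2*lam = (1-mu) * Real.cos t - mu * (2 * Real.cos t ^ 2 - 1) := by
    linear_combination Real.cos a * E1 + Real.sin a * E2
      - ((1-2*lam) - (1-mu)*Real.cos t + mu*(Real.cos t^2 - Real.sin t^2)) * pytha
      + mu * pytht
  have key2 : (0:ℝ) = (1-mu) * Real.sin t - mu * (2 * Real.sin t * Real.cos t) := by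
    linear_combination Real.cos a * E2 - Real.sin a * E1
      + ((1-mu)*Real.sin t - 2*mu*Real.sin t*Real.cos t) * pytha
  have hfac : Real.sin t * (1 - mu * (1 + 2*Real.cos t)) = 0 := by linear_combination -key2
  have hmu1 : mu * (1 + 2*Real.cos t) = 1 := by
    rcases mul_eq_zero.mp hfac with h | h
    · exact absurd h hst.ne'
    · linarith
  have hlam1 : 1 - 2*lam = mu := by linear_combination key1 - Real.cos t * hmu1
  have hlmu : lam = mu * Real.cos t := by
    linear_combination (-(1:ℝ)/2) * hmu1 - (1/2 : ℝ) * hlam1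
  have hc2 : Real.cos (π / n) ^ 2 = (1 + Real.cos t) / 2 := by
    have h := Real.cos_sq (π / n)
    rw [show 2 * (π / (n:ℝ)) = t by rw [ht]; ring] at h
    rw [h]; ring
  have hden : lam + (Real.cos t / Real.cos (π/n))^2 * (1-lam) = Real.cos t := by
    rw [div_pow, hc2]
    have h1ct : (1 + Real.cos t) / 2 ≠ 0 := by positivity
    field_simp
    linear_combination (1 + Real.cos t - 2*Real.cos t^2) * hlmu + Real.cos t*(1 - Real.cos t) * hmu1
  rw [hden, hlmu, mul_div_assoc, div_self hct.ne', mul_one]
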